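/- arXiv:1910.03379 — 4 statements merged into one kernel-verified Lean document; each statement's English description precedes it below -/
import Mathlib

section
/- The incentres of the four triangles formed by a cyclic quadrangle lie at the vertices of a rectangle: if points P₀P₁P₂P₃ lie on a circle, then the incentres of triangles P₁P₂P₃, P₀P₂P₃, P₀P₁P₃, P₀P₁P₂ form a rectangle. -/
open Complex

noncomputable def cE (t : ℝ) : ℂ := Complex.exp (t * Complex.I)
noncomputable def cin (X Y Z : ℂ) : ℂ :=
  (dist Y Z + dist Z X + dist X Y)⁻¹ •
    (dist Y Z • X + dist Z X • Y + dist X Y • Z)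

lemma cE_mul (s t : ℝ) : cE s * cE t = cE (s + t) := by
  rw [cE, cE, cE, ← Complex.exp_add]; push_cast; ring_nf

lemma cE_ne_zero (t : ℝ) : cE t ≠ 0 := Complex.exp_ne_zero _

lemma cE_sub (s t : ℝ) : cE (s - t) = cE s / cE t := by
  rw [eq_div_iff (cE_ne_zero t), cE_mul]; ring_nf

lemma cE_add (s t : ℝ) : cE (s + t) = cE s * cE t := (cE_mul s t).symm

lemma cE_two (s : ℝ) : cE (2*s) = cE s * cE s := by
  rw [show (2*s) = s + s by ring, cE_add]

lemma sinC (t : ℝ) : ((Real.sin t : ℝ) : ℂ) = (cE t - cE (-t)) / (2 * I) := by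
  rw [cE, cE, show ((-t : ℝ) : ℂ) * I = (-(t:ℝ):ℂ) * I by push_cast; ring,
    Complex.exp_mul_I, Complex.exp_mul_I, Complex.sin_neg, Complex.cos_neg,
    Complex.ofReal_sin]
  field_simp [cE_ne_zero]
  ring

lemma sinC2 (s t : ℝ) : Complex.sin ((s:ℂ) - (t:ℂ)) = (cE (s-t) - cE (t-s)) / (2*I) := by
  have := sinC (s - t)
  rw [show -(s-t) = t - s by ring] at this
  rw [← this]; push_cast; ring_nf

lemma cin_eq (o X Y Z : ℂ) (r : ℝ) (hr : 0 < r) (ψ φ χ : ℝ)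
    (hX : X = o + r * cE (2*ψ)) (hY : Y = o + r * cE (2*φ)) (hZ : Z = o + r * cE (2*χ))
    (dYZ : dist Y Z = 2*r*Real.sin (χ-φ)) (dZX : dist Z X = 2*r*Real.sin (χ-ψ))
    (dXY : dist X Y = 2*r*Real.sin (φ-ψ))
    (hL : 0 < Real.sin (χ-φ) + Real.sin (χ-ψ) + Real.sin (φ-ψ)) :
    cin X Y Z = o + r * (cE (ψ+φ) + cE (φ+χ) - cE (ψ+χ)) := by
  have hLne : ((2*r*Real.sin (χ-φ) + 2*r*Real.sin (χ-ψ) + 2*r*Real.sin (φ-ψ) : ℝ) : ℂ) ≠ 0 := by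
    rw [Complex.ofReal_ne_zero]; nlinarith
  rw [cin, dYZ, dZX, dXY, hX, hY, hZ]
  simp only [Complex.real_smul, Complex.ofReal_inv]
  rw [inv_mul_eq_div, div_eq_iff hLne]
  push_cast
  rw [sinC2 χ φ, sinC2 χ ψ, sinC2 φ ψ,
    cE_sub χ φ, cE_sub φ χ, cE_sub χ ψ, cE_sub ψ χ, cE_sub φ ψ, cE_sub ψ φ,
    cE_two ψ, cE_two φ, cE_two χ, cE_add ψ φ, cE_add φ χ, cE_add ψ χ]
  field_simp [cE_ne_zero]
  ring

lemma cE_abs (t : ℝ) : ‖cE t‖ = 1 := by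
  rw [cE, Complex.norm_exp]; simp

lemma cE_conj (t : ℝ) : (starRingEnd ℂ) (cE t) = cE (-t) := by
  rw [cE, cE, ← Complex.exp_conj]; congr 1; simp

lemma cE_unit (t : ℝ) : cE t * cE (-t) = 1 := by
  rw [cE_mul, show t + -t = 0 by ring, cE, Complex.ofReal_zero, zero_mul, Complex.exp_zero]

lemma cE_im (t : ℝ) : (cE t).im = Real.sin t := by
  rw [cE, Complex.exp_mul_I]
  simp [Complex.add_im, ← Complex.ofReal_sin, ← Complex.ofReal_cos]

/-- chord length -/
lemma chord (o : ℂ) (r : ℝ) (hr : 0 ≤ r) (ψ φ : ℝ) (h1 : ψ ≤ φ) (h2 : φ - ψ ≤ Real.pi) :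
    dist (o + r * cE (2*ψ)) (o + r * cE (2*φ)) = 2 * r * Real.sin (φ - ψ) := by
  have key : (o + r * cE (2*ψ)) - (o + r * cE (2*φ)) =
      (2 * r * Real.sin (φ - ψ)) * (cE (ψ + φ) * (-I)) := by
    rw [sinC]
    have h3 : cE (φ - ψ) * cE (ψ + φ) = cE (2*φ) := by rw [cE_mul]; ring_nf
    have h4 : cE (ψ - φ) * cE (ψ + φ) = cE (2*ψ) := by rw [cE_mul]; ring_nf
    rw [show -(φ - ψ) = ψ - φ by ring]
    field_simp
    linear_combination (r:ℂ)*h3 - (r:ℂ)*h4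
  have hs : 0 ≤ Real.sin (φ - ψ) := Real.sin_nonneg_of_nonneg_of_le_pi (by linarith) h2
  rw [Complex.dist_eq, key]
  simp only [norm_mul, cE_abs, Complex.norm_real, Real.norm_eq_abs, norm_neg, Complex.norm_I,
    Complex.norm_two]
  rw [_root_.abs_of_nonneg hr, _root_.abs_of_nonneg hs]
  ring

lemma abs_of_mul_conj {u v : ℂ} (h : u * (starRingEnd ℂ) u = v * (starRingEnd ℂ) v) :
    ‖u‖ = ‖v‖ := by
  rw [Complex.mul_conj, Complex.mul_conj] at h
  rw [Complex.norm_def, Complex.norm_def, Complex.ofReal_inj.mp h]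

set_option maxHeartbeats 2000000 in
lemma key (o z₀ z₁ z₂ z₃ : ℂ) (r : ℝ) (hr : 0 < r) (ψ₀ ψ₁ ψ₂ ψ₃ : ℝ)
    (hz0 : z₀ = o + r * cE (2*ψ₀)) (hz1 : z₁ = o + r * cE (2*ψ₁))
    (hz2 : z₂ = o + r * cE (2*ψ₂)) (hz3 : z₃ = o + r * cE (2*ψ₃))
    (h01 : ψ₀ ≤ ψ₁) (h12 : ψ₁ ≤ ψ₂) (h23 : ψ₂ ≤ ψ₃) (h30 : ψ₃ ≤ ψ₀ + Real.pi)
    (h02 : ψ₀ < ψ₂) (h02' : ψ₂ < ψ₀ + Real.pi)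
    (h13 : ψ₁ < ψ₃) (h13' : ψ₃ < ψ₁ + Real.pi) :
    (cin z₀ z₂ z₃ - cin z₁ z₂ z₃ = cin z₀ z₁ z₃ - cin z₀ z₁ z₂) ∧
    dist (cin z₁ z₂ z₃) (cin z₀ z₁ z₃) = dist (cin z₀ z₂ z₃) (cin z₀ z₁ z₂) := by
  have s02 : 0 < Real.sin (ψ₂ - ψ₀) := Real.sin_pos_of_pos_of_lt_pi (by linarith) (by linarith)
  have s13 : 0 < Real.sin (ψ₃ - ψ₁) := Real.sin_pos_of_pos_of_lt_pi (by linarith) (by linarith)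
  have s01 : 0 ≤ Real.sin (ψ₁ - ψ₀) := Real.sin_nonneg_of_nonneg_of_le_pi (by linarith) (by linarith)
  have s12 : 0 ≤ Real.sin (ψ₂ - ψ₁) := Real.sin_nonneg_of_nonneg_of_le_pi (by linarith) (by linarith)
  have s23 : 0 ≤ Real.sin (ψ₃ - ψ₂) := Real.sin_nonneg_of_nonneg_of_le_pi (by linarith) (by linarith)
  have s03 : 0 ≤ Real.sin (ψ₃ - ψ₀) := Real.sin_nonneg_of_nonneg_of_le_pi (by linarith) (by linarith)
  have d01 : dist z₀ z₁ = 2*r*Real.sin (ψ₁-ψ₀) := by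
    rw [hz0, hz1]; exact chord o r hr.le ψ₀ ψ₁ h01 (by linarith)
  have d02 : dist z₀ z₂ = 2*r*Real.sin (ψ₂-ψ₀) := by
    rw [hz0, hz2]; exact chord o r hr.le ψ₀ ψ₂ (by linarith) (by linarith)
  have d03 : dist z₀ z₃ = 2*r*Real.sin (ψ₃-ψ₀) := by
    rw [hz0, hz3]; exact chord o r hr.le ψ₀ ψ₃ (by linarith) (by linarith)
  have d12 : dist z₁ z₂ = 2*r*Real.sin (ψ₂-ψ₁) := by
    rw [hz1, hz2]; exact chord o r hr.le ψ₁ ψ₂ (by linarith) (by linarith)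
  have d13 : dist z₁ z₃ = 2*r*Real.sin (ψ₃-ψ₁) := by
    rw [hz1, hz3]; exact chord o r hr.le ψ₁ ψ₃ (by linarith) (by linarith)
  have d23 : dist z₂ z₃ = 2*r*Real.sin (ψ₃-ψ₂) := by
    rw [hz2, hz3]; exact chord o r hr.le ψ₂ ψ₃ (by linarith) (by linarith)
  have d30 : dist z₃ z₀ = 2*r*Real.sin (ψ₃-ψ₀) := by rw [dist_comm]; exact d03
  have d31 : dist z₃ z₁ = 2*r*Real.sin (ψ₃-ψ₁) := by rw [dist_comm]; exact d13
  have d20 : dist z₂ z₀ = 2*r*Real.sin (ψ₂-ψ₀) := by rw [dist_comm]; exact d02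
  have d21 : dist z₂ z₁ = 2*r*Real.sin (ψ₂-ψ₁) := by rw [dist_comm]; exact d12
  have hA : cin z₀ z₂ z₃ = o + r * (cE (ψ₀+ψ₂) + cE (ψ₂+ψ₃) - cE (ψ₀+ψ₃)) :=
    cin_eq o z₀ z₂ z₃ r hr ψ₀ ψ₂ ψ₃ hz0 hz2 hz3 d23 d30 d02 (by linarith)
  have hB : cin z₁ z₂ z₃ = o + r * (cE (ψ₁+ψ₂) + cE (ψ₂+ψ₃) - cE (ψ₁+ψ₃)) :=
    cin_eq o z₁ z₂ z₃ r hr ψ₁ ψ₂ ψ₃ hz1 hz2 hz3 d23 d31 d12 (by linarith)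
  have hC : cin z₀ z₁ z₃ = o + r * (cE (ψ₀+ψ₁) + cE (ψ₁+ψ₃) - cE (ψ₀+ψ₃)) :=
    cin_eq o z₀ z₁ z₃ r hr ψ₀ ψ₁ ψ₃ hz0 hz1 hz3 d13 d30 d01 (by linarith)
  have hD : cin z₀ z₁ z₂ = o + r * (cE (ψ₀+ψ₁) + cE (ψ₁+ψ₂) - cE (ψ₀+ψ₂)) :=
    cin_eq o z₀ z₁ z₂ r hr ψ₀ ψ₁ ψ₂ hz0 hz1 hz2 d12 d20 d01 (by linarith)
  constructor
  · rw [hA, hB, hC, hD, cE_add ψ₀ ψ₂, cE_add ψ₂ ψ₃, cE_add ψ₀ ψ₃, cE_add ψ₁ ψ₂,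
      cE_add ψ₁ ψ₃, cE_add ψ₀ ψ₁]
    ring
  · rw [hA, hB, hC, hD, cE_add ψ₀ ψ₂, cE_add ψ₂ ψ₃, cE_add ψ₀ ψ₃, cE_add ψ₁ ψ₂,
      cE_add ψ₁ ψ₃, cE_add ψ₀ ψ₁, Complex.dist_eq, Complex.dist_eq]
    rw [show (o + ↑r * (cE ψ₁ * cE ψ₂ + cE ψ₂ * cE ψ₃ - cE ψ₁ * cE ψ₃)) -
        (o + ↑r * (cE ψ₀ * cE ψ₁ + cE ψ₁ * cE ψ₃ - cE ψ₀ * cE ψ₃)) =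
        ↑r * ((cE ψ₁ * cE ψ₂ + cE ψ₂ * cE ψ₃ - cE ψ₁ * cE ψ₃) -
          (cE ψ₀ * cE ψ₁ + cE ψ₁ * cE ψ₃ - cE ψ₀ * cE ψ₃)) by ring,
      show (o + ↑r * (cE ψ₀ * cE ψ₂ + cE ψ₂ * cE ψ₃ - cE ψ₀ * cE ψ₃)) -
        (o + ↑r * (cE ψ₀ * cE ψ₁ + cE ψ₁ * cE ψ₂ - cE ψ₀ * cE ψ₂)) =
        ↑r * ((cE ψ₀ * cE ψ₂ + cE ψ₂ * cE ψ₃ - cE ψ₀ * cE ψ₃) -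
          (cE ψ₀ * cE ψ₁ + cE ψ₁ * cE ψ₂ - cE ψ₀ * cE ψ₂)) by ring,
      norm_mul, norm_mul]
    congr 1
    apply abs_of_mul_conj
    simp only [map_sub, map_add, map_mul, cE_conj]
    have R0 := cE_unit ψ₀
    have R1 := cE_unit ψ₁
    have R2 := cE_unit ψ₂
    have R3 := cE_unit ψ₃
    linear_combination
      ((2)*(cE ψ₃)*(cE (-ψ₂)) + (-2)*(cE ψ₃)*(cE (-ψ₁)) + (2)*(cE ψ₂)*(cE (-ψ₃)) + (-4)*(cE ψ₂)*(cE (-ψ₂)) + (2)*(cE ψ₂)*(cE (-ψ₁)) + (-2)*(cE ψ₁)*(cE (-ψ₃)) + (2)*(cE ψ₁)*(cE (-ψ₂))) * R0 +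
      ((4)*(cE ψ₃)*(cE (-ψ₃)) + (-2)*(cE ψ₃)*(cE (-ψ₂)) + (2)*(cE ψ₃)*(cE (-ψ₀)) + (-2)*(cE ψ₂)*(cE (-ψ₃)) + (-2)*(cE ψ₂)*(cE (-ψ₀)) + (2)*(cE ψ₀)*(cE (-ψ₃)) + (-2)*(cE ψ₀)*(cE (-ψ₂))) * R1 +
      ((-4) + (2)*(cE ψ₃)*(cE (-ψ₁)) + (-2)*(cE ψ₃)*(cE (-ψ₀)) + (2)*(cE ψ₁)*(cE (-ψ₃)) + (2)*(cE ψ₁)*(cE (-ψ₀)) + (-2)*(cE ψ₀)*(cE (-ψ₃)) + (2)*(cE ψ₀)*(cE (-ψ₁))) * R2 +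
      ((4) + (-2)*(cE ψ₂)*(cE (-ψ₁)) + (2)*(cE ψ₂)*(cE (-ψ₀)) + (-2)*(cE ψ₁)*(cE (-ψ₂)) + (-2)*(cE ψ₁)*(cE (-ψ₀)) + (2)*(cE ψ₀)*(cE (-ψ₂)) + (-2)*(cE ψ₀)*(cE (-ψ₁))) * R3


lemma trig_id (u v : ℝ) : -Real.sin (2*v) - Real.sin (2*u) + Real.sin (2*(u+v)) =
    -4 * Real.sin u * Real.sin v * Real.sin (u+v) := by
  rw [Real.sin_two_mul, Real.sin_two_mul, Real.sin_two_mul, Real.sin_add, Real.cos_add]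
  linear_combination (2*Real.sin v*Real.cos v) * Real.sin_sq_add_cos_sq u +
    (2*Real.sin u*Real.cos u) * Real.sin_sq_add_cos_sq v

lemma im_helper (a b c : ℝ) : ((cE a - cE b) * (starRingEnd ℂ) (cE c - cE b)).im =
    -4 * Real.sin ((a-b)/2) * Real.sin ((c-a)/2) * Real.sin ((c-b)/2) := by
  have m1 : cE a * cE (-c) = cE (a - c) := by rw [cE_mul]; ring_nf
  have m2 : cE a * cE (-b) = cE (a - b) := by rw [cE_mul]; ring_nf
  have m3 : cE b * cE (-c) = cE (b - c) := by rw [cE_mul]; ring_nf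
  have m4 := cE_unit b
  have e1 : (cE a - cE b) * (starRingEnd ℂ) (cE c - cE b) =
      cE (a-c) - cE (a-b) - cE (b-c) + 1 := by
    simp only [map_sub, cE_conj]
    linear_combination m1 - m2 - m3 + m4
  rw [e1]
  simp only [Complex.add_im, Complex.sub_im, cE_im, Complex.one_im]
  rw [show Real.sin (a-c) = Real.sin (-(2*((c-a)/2))) from by congr 1; ring,
    show Real.sin (a-b) = Real.sin (2*((a-b)/2)) from by congr 1; ring,
    show Real.sin (b-c) = Real.sin (-(2*((a-b)/2 + (c-a)/2))) from by congr 1; ring,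
    show Real.sin ((c-b)/2) = Real.sin ((a-b)/2 + (c-a)/2) from by congr 1; ring,
    Real.sin_neg, Real.sin_neg]
  linear_combination trig_id ((a-b)/2) ((c-a)/2)

lemma aux_sin_pos {x : ℝ} (h1 : -Real.pi < x) (h2 : x < Real.pi) (h : 0 < Real.sin x) : 0 < x := by
  rcases lt_trichotomy x 0 with hx | hx | hx
  · have : Real.sin x < 0 := by
      have : 0 < Real.sin (-x) := Real.sin_pos_of_pos_of_lt_pi (by linarith) (by linarith)
      rw [Real.sin_neg] at this; linarith
    linarith
  · simp [hx] at h
  · exact hx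

lemma aux_sin_neg {x : ℝ} (h1 : -Real.pi < x) (h2 : x < Real.pi) (h : Real.sin x < 0) : x < 0 := by
  rcases lt_trichotomy x 0 with hx | hx | hx
  · exact hx
  · simp [hx] at h
  · have : 0 < Real.sin x := Real.sin_pos_of_pos_of_lt_pi hx h2
    linarith

lemma aux_sin_zero {x : ℝ} (h1 : -Real.pi < x) (h2 : x < Real.pi) (h : Real.sin x = 0) : x = 0 := by
  rcases lt_trichotomy x 0 with hx | hx | hx
  · have : 0 < Real.sin (-x) := Real.sin_pos_of_pos_of_lt_pi (by linarith) (by linarith)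
    rw [Real.sin_neg] at this; linarith
  · exact hx
  · have : 0 < Real.sin x := Real.sin_pos_of_pos_of_lt_pi hx h2
    linarith

lemma cE_two_pi : cE (2*Real.pi) = 1 := by
  rw [cE]; push_cast; exact Complex.exp_two_pi_mul_I

lemma cE_period (t : ℝ) : cE (t + 2*Real.pi) = cE t := by
  rw [← cE_mul, cE_two_pi, mul_one]

lemma cE_inj {s t : ℝ} (hd : |s - t| < 2*Real.pi) (h : cE s = cE t) : s = t := by
  have h1 : cE (s - t) = 1 := by
    have := congrArg (· * cE (-t)) h
    rw [cE_unit, cE_mul, show s + -t = s - t by ring] at this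
    exact this
  rw [cE, Complex.exp_eq_one_iff] at h1
  obtain ⟨n, hn⟩ := h1
  have hn' : (s - t : ℝ) = n * (2*Real.pi) := by
    have := mul_right_cancel₀ Complex.I_ne_zero (by rw [hn]; ring : ((s-t:ℝ):ℂ) * I = (↑n * (2*Real.pi) : ℂ) * I)
    exact_mod_cast this
  have hπ := Real.pi_pos
  have : |(n:ℝ)| * (2*Real.pi) < 2*Real.pi := by
    calc |(n:ℝ)| * (2*Real.pi) = |(n:ℝ) * (2*Real.pi)| := by
          rw [abs_mul, abs_of_pos (by linarith : (0:ℝ) < 2*Real.pi)]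
      _ = |s - t| := by rw [hn']
      _ < 2*Real.pi := hd
  have hn0 : n = 0 := by
    have : |(n:ℝ)| < 1 := by nlinarith
    have : |n| < 1 := by exact_mod_cast this
    have h' := abs_lt.mp this
    omega
  rw [hn0] at hn'
  simp at hn'
  linarith


lemma cin_swap_left (X Y Z : ℂ) : cin X Y Z = cin Y X Z := by
  simp only [cin, Complex.real_smul]
  push_cast
  rw [dist_comm X Z, dist_comm Z Y, dist_comm Y X]
  ring

lemma cin_swap_right (X Y Z : ℂ) : cin X Y Z = cin X Z Y := by
  simp only [cin, Complex.real_smul]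
  push_cast
  rw [dist_comm X Z, dist_comm Z Y, dist_comm Y X]
  ring

lemma cin_rev (X Y Z : ℂ) : cin X Y Z = cin Z Y X := by
  rw [cin_swap_left, cin_swap_right, cin_swap_left]

lemma cE_half (t : ℝ) : cE (2*(t/2)) = cE t := by congr 1; ring

lemma circle_param {o z : ℂ} {r : ℝ} (hr : 0 < r) (h : dist o z = r) :
    ∃ θ : ℝ, -Real.pi < θ ∧ θ ≤ Real.pi ∧ z = o + r * cE θ := by
  have hw : ‖z - o‖ = r := by
    rw [← Complex.dist_eq, dist_comm]; exact h
  refine ⟨Complex.arg (z - o), Complex.neg_pi_lt_arg _, Complex.arg_le_pi _, ?_⟩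
  have := Complex.norm_mul_exp_arg_mul_I (z - o)
  rw [hw] at this
  rw [cE]; linear_combination -this

set_option maxHeartbeats 4000000 in
lemma complex_main (o z₀ z₁ z₂ z₃ X : ℂ) (r : ℝ) (hr : 0 < r)
    (h0 : dist o z₀ = r) (h1 : dist o z₁ = r) (h2 : dist o z₂ = r) (h3 : dist o z₃ = r)
    (hX02 : Sbtw ℝ z₀ X z₂) (hX13 : Sbtw ℝ z₁ X z₃) :
    (cin z₀ z₂ z₃ - cin z₁ z₂ z₃ = cin z₀ z₁ z₃ - cin z₀ z₁ z₂) ∧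
    dist (cin z₁ z₂ z₃) (cin z₀ z₁ z₃) = dist (cin z₀ z₂ z₃) (cin z₀ z₁ z₂) := by
  have hπ := Real.pi_pos
  obtain ⟨θ₀, hl0, hu0, hz0⟩ := circle_param hr h0
  obtain ⟨θ₁, hl1, hu1, hz1⟩ := circle_param hr h1
  obtain ⟨θ₂, hl2, hu2, hz2⟩ := circle_param hr h2
  obtain ⟨θ₃, hl3, hu3, hz3⟩ := circle_param hr h3
  set τ₁ := if θ₁ < θ₀ then θ₁ + 2*Real.pi else θ₁ with hτ₁
  set τ₂ := if θ₂ < θ₀ then θ₂ + 2*Real.pi else θ₂ with hτ₂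
  set τ₃ := if θ₃ < θ₀ then θ₃ + 2*Real.pi else θ₃ with hτ₃
  have hz1' : z₁ = o + r * cE τ₁ := by
    rw [hτ₁]; split_ifs with h
    · rw [cE_period]; exact hz1
    · exact hz1
  have hz2' : z₂ = o + r * cE τ₂ := by
    rw [hτ₂]; split_ifs with h
    · rw [cE_period]; exact hz2
    · exact hz2
  have hz3' : z₃ = o + r * cE τ₃ := by
    rw [hτ₃]; split_ifs with h
    · rw [cE_period]; exact hz3
    · exact hz3
  have hb1 : θ₀ ≤ τ₁ ∧ τ₁ < θ₀ + 2*Real.pi := by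
    rw [hτ₁]; split_ifs with h <;> constructor <;> linarith
  have hb2 : θ₀ ≤ τ₂ ∧ τ₂ < θ₀ + 2*Real.pi := by
    rw [hτ₂]; split_ifs with h <;> constructor <;> linarith
  have hb3 : θ₀ ≤ τ₃ ∧ τ₃ < θ₀ + 2*Real.pi := by
    rw [hτ₃]; split_ifs with h <;> constructor <;> linarith
  have hrC : (r:ℂ) ≠ 0 := by exact_mod_cast hr.ne'
  have hne02 : z₀ ≠ z₂ := hX02.left_ne_right
  have hne13 : z₁ ≠ z₃ := hX13.left_ne_right
  have ht02 : θ₀ < τ₂ := by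
    rcases lt_or_eq_of_le hb2.1 with h | h
    · exact h
    · exact absurd (by rw [hz0, hz2', ← h]) hne02
  have ht13 : τ₁ ≠ τ₃ := by
    intro h
    exact hne13 (by rw [hz1', hz3', h])
  obtain ⟨a, b, ha, hb, hab, hXab⟩ := hX02.wbtw.mem_segment
  obtain ⟨a', b', ha', hb', hab', hXab'⟩ := hX13.wbtw.mem_segment
  have hXc : (a:ℂ) * z₀ + (b:ℂ) * z₂ = X := by
    rw [← hXab]; simp [Complex.real_smul]
  have hXc' : (a':ℂ) * z₁ + (b':ℂ) * z₃ = X := by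
    rw [← hXab']; simp [Complex.real_smul]
  have cab : (a:ℂ) + (b:ℂ) = 1 := by exact_mod_cast hab
  have cab' : (a':ℂ) + (b':ℂ) = 1 := by exact_mod_cast hab'
  have ha'pos : 0 < a' := by
    rcases lt_or_eq_of_le ha' with h | h
    · exact h
    · exfalso
      apply hX13.ne_right
      have hb'1 : (b' : ℂ) = 1 := by rw [← cab', ← h]; push_cast; ring
      rw [← hXc', ← h, hb'1]; push_cast; ring
  have hb'pos : 0 < b' := by
    rcases lt_or_eq_of_le hb' with h | h
    · exact h
    · exfalso
      apply hX13.ne_left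
      have ha'1 : (a' : ℂ) = 1 := by rw [← cab', ← h]; push_cast; ring
      rw [← hXc', ← h, ha'1]; push_cast; ring
  have e1 : (a':ℂ) * (z₁ - z₀) + (b':ℂ) * (z₃ - z₀) = (b:ℂ) * (z₂ - z₀) := by
    linear_combination hXc' - hXc + z₀ * (cab - cab')
  have him : a' * ((z₁ - z₀) * (starRingEnd ℂ) (z₂ - z₀)).im
      + b' * ((z₃ - z₀) * (starRingEnd ℂ) (z₂ - z₀)).im = 0 := by
    have e2 : ((a':ℂ) * ((z₁ - z₀) * (starRingEnd ℂ) (z₂ - z₀))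
        + (b':ℂ) * ((z₃ - z₀) * (starRingEnd ℂ) (z₂ - z₀))).im
        = (((b:ℂ) * (z₂ - z₀)) * (starRingEnd ℂ) (z₂ - z₀)).im := by
      congr 1
      linear_combination (starRingEnd ℂ) (z₂ - z₀) * e1
    have e3 : (((b:ℂ) * (z₂ - z₀)) * (starRingEnd ℂ) (z₂ - z₀)).im = 0 := by
      rw [mul_assoc, Complex.mul_conj]
      simp [Complex.mul_im]
    have e4 : ((a':ℂ) * ((z₁ - z₀) * (starRingEnd ℂ) (z₂ - z₀))
        + (b':ℂ) * ((z₃ - z₀) * (starRingEnd ℂ) (z₂ - z₀))).im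
        = a' * ((z₁ - z₀) * (starRingEnd ℂ) (z₂ - z₀)).im
          + b' * ((z₃ - z₀) * (starRingEnd ℂ) (z₂ - z₀)).im := by
      simp [Complex.add_im, Complex.mul_im]
    rw [e4, e3] at e2
    exact e2
  have fcomp : ∀ (z : ℂ) (τ : ℝ), z = o + r * cE τ →
      ((z - z₀) * (starRingEnd ℂ) (z₂ - z₀)).im
      = r^2 * (-4 * Real.sin ((τ-θ₀)/2) * Real.sin ((τ₂-τ)/2) * Real.sin ((τ₂-θ₀)/2)) := by
    intro z τ hz
    have hd1 : z - z₀ = (r:ℂ) * (cE τ - cE θ₀) := by rw [hz, hz0]; ring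
    have hd2 : z₂ - z₀ = (r:ℂ) * (cE τ₂ - cE θ₀) := by rw [hz2', hz0]; ring
    rw [hd1, hd2, map_mul, Complex.conj_ofReal,
      show ((r:ℂ) * (cE τ - cE θ₀)) * ((r:ℂ) * (starRingEnd ℂ) (cE τ₂ - cE θ₀))
        = ((r^2 : ℝ) : ℂ) * ((cE τ - cE θ₀) * (starRingEnd ℂ) (cE τ₂ - cE θ₀)) by push_cast; ring]
    rw [Complex.mul_im]
    simp only [Complex.ofReal_re, Complex.ofReal_im, zero_mul, add_zero]
    rw [im_helper τ θ₀ τ₂]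
  have f1 := fcomp z₁ τ₁ hz1'
  have f3 := fcomp z₃ τ₃ hz3'
  rw [f1, f3] at him
  clear f1 f3 e1 hXc hXc' cab cab' hXab hXab' hz1 hz2 hz3
  have hsA : 0 < Real.sin ((τ₂-θ₀)/2) :=
    Real.sin_pos_of_pos_of_lt_pi (by linarith) (by linarith [hb2.2])
  have him2 : a' * (Real.sin ((τ₁-θ₀)/2) * Real.sin ((τ₂-τ₁)/2))
      + b' * (Real.sin ((τ₃-θ₀)/2) * Real.sin ((τ₂-τ₃)/2)) = 0 := by
    have hfac : (-4 * r^2 * Real.sin ((τ₂-θ₀)/2)) *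
        (a' * (Real.sin ((τ₁-θ₀)/2) * Real.sin ((τ₂-τ₁)/2))
          + b' * (Real.sin ((τ₃-θ₀)/2) * Real.sin ((τ₂-τ₃)/2))) = 0 := by
      linear_combination him
    have hne : (-4 * r^2 * Real.sin ((τ₂-θ₀)/2)) ≠ 0 := by
      have h4 : 0 < 4 * r^2 * Real.sin ((τ₂-θ₀)/2) :=
        mul_pos (by positivity) hsA
      intro hzero
      rw [show (-4 * r^2 * Real.sin ((τ₂-θ₀)/2)) = -(4 * r^2 * Real.sin ((τ₂-θ₀)/2)) by ring]
        at hzero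
      linarith [neg_eq_zero.mp hzero]
    exact (mul_eq_zero.mp hfac).resolve_left hne
  clear him
  have hx1l : 0 ≤ (τ₁-θ₀)/2 := by linarith [hb1.1]
  have hx1u : (τ₁-θ₀)/2 < Real.pi := by linarith [hb1.2]
  have hx3l : 0 ≤ (τ₃-θ₀)/2 := by linarith [hb3.1]
  have hx3u : (τ₃-θ₀)/2 < Real.pi := by linarith [hb3.2]
  have hy1l : -Real.pi < (τ₂-τ₁)/2 := by linarith [hb2.1, hb1.2]
  have hy1u : (τ₂-τ₁)/2 < Real.pi := by linarith [hb2.2, hb1.1]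
  have hy3l : -Real.pi < (τ₂-τ₃)/2 := by linarith [hb2.1, hb3.2]
  have hy3u : (τ₂-τ₃)/2 < Real.pi := by linarith [hb2.2, hb3.1]
  have hs1nn : 0 ≤ Real.sin ((τ₁-θ₀)/2) :=
    Real.sin_nonneg_of_nonneg_of_le_pi hx1l (by linarith)
  have hs3nn : 0 ≤ Real.sin ((τ₃-θ₀)/2) :=
    Real.sin_nonneg_of_nonneg_of_le_pi hx3l (by linarith)
  set s1 := Real.sin ((τ₁-θ₀)/2) with hs1d
  set s3 := Real.sin ((τ₃-θ₀)/2) with hs3d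
  set y1 := Real.sin ((τ₂-τ₁)/2) with hy1d
  set y3 := Real.sin ((τ₂-τ₃)/2) with hy3d
  rcases lt_trichotomy (s1 * y1) 0 with hc | hc | hc
  · -- order θ₀ < τ₃ < τ₂ < τ₁ : apply key to (z₀, z₃, z₂, z₁)
    have hs1pos : 0 < s1 := by
      rcases lt_or_eq_of_le hs1nn with h | h
      · exact h
      · rw [← h, zero_mul] at hc; exact absurd hc (lt_irrefl 0)
    have hy1neg : y1 < 0 := by
      by_contra hcon
      push_neg at hcon
      exact absurd hc (not_lt.mpr (mul_nonneg hs1pos.le hcon))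
    have h21 : τ₂ < τ₁ := by
      have := aux_sin_neg hy1l hy1u hy1neg; linarith
    have ht3pos : 0 < s3 * y3 := by
      have h1 : 0 < -(a' * (s1 * y1)) := by
        have := mul_neg_of_pos_of_neg ha'pos hc; linarith
      have h2 : b' * (s3 * y3) = -(a' * (s1 * y1)) := by linarith [him2]
      by_contra hcon
      push_neg at hcon
      have := mul_nonpos_of_nonneg_of_nonpos hb'pos.le hcon
      linarith
    have hs3pos : 0 < s3 := by
      rcases lt_or_eq_of_le hs3nn with h | h
      · exact h
      · rw [← h, zero_mul] at ht3pos; exact absurd ht3pos (lt_irrefl 0)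
    have hy3pos : 0 < y3 := by
      by_contra hcon
      push_neg at hcon
      exact absurd ht3pos (not_lt.mpr (mul_nonpos_of_nonneg_of_nonpos hs3pos.le hcon))
    have h03 : θ₀ < τ₃ := by
      have := aux_sin_pos (by linarith) hx3u hs3pos; linarith
    have h32 : τ₃ < τ₂ := by
      have := aux_sin_pos hy3l hy3u hy3pos; linarith
    obtain ⟨hk1, hk2⟩ := key o z₀ z₃ z₂ z₁ r hr (θ₀/2) (τ₃/2) (τ₂/2) (τ₁/2)
      (by rw [hz0, cE_half]) (by rw [hz3', cE_half])
      (by rw [hz2', cE_half]) (by rw [hz1', cE_half])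
      (by linarith) (by linarith) (by linarith) (by linarith [hb1.2])
      (by linarith) (by linarith [hb2.2]) (by linarith) (by linarith [hb1.2])
    rw [cin_swap_right z₀ z₂ z₁, cin_rev z₃ z₂ z₁, cin_swap_right z₀ z₃ z₁,
      cin_swap_right z₀ z₃ z₂] at hk1 hk2
    constructor
    · linear_combination hk1
    · rw [hk2, dist_comm]
  · -- degenerate cases
    have hb't3 : b' * (s3 * y3) = 0 := by
      rw [hc] at him2
      linarith [him2]
    have ht30 : s3 * y3 = 0 := by
      rcases mul_eq_zero.mp hb't3 with h | h
      · exact absurd h (by linarith)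
      · exact h
    have hτ1cases : τ₁ = θ₀ ∨ τ₁ = τ₂ := by
      rcases mul_eq_zero.mp hc with h | h
      · left
        have := aux_sin_zero (by linarith) hx1u (by rw [← hs1d]; exact h)
        linarith
      · right
        have := aux_sin_zero hy1l hy1u (by rw [← hy1d]; exact h)
        linarith
    have hτ3cases : τ₃ = θ₀ ∨ τ₃ = τ₂ := by
      rcases mul_eq_zero.mp ht30 with h | h
      · left
        have := aux_sin_zero (by linarith) hx3u (by rw [← hs3d]; exact h)
        linarith
      · right
        have := aux_sin_zero hy3l hy3u (by rw [← hy3d]; exact h)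
        linarith
    rcases hτ1cases with h1c | h1c <;> rcases hτ3cases with h3c | h3c
    · exact absurd (h1c.trans h3c.symm) ht13
    · -- τ₁ = θ₀, τ₃ = τ₂
      exact key o z₀ z₁ z₂ z₃ r hr (θ₀/2) (τ₁/2) (τ₂/2) (τ₃/2)
        (by rw [hz0, cE_half]) (by rw [hz1', cE_half])
        (by rw [hz2', cE_half]) (by rw [hz3', cE_half])
        (by linarith) (by linarith) (by linarith) (by linarith [hb3.2])
        (by linarith) (by linarith [hb2.2]) (by linarith) (by linarith [hb3.2])
    · -- τ₁ = τ₂, τ₃ = θ₀ : represent z₃ with angle θ₀ + 2π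
      have hz3'' : z₃ = o + r * cE (2*(θ₀/2 + Real.pi)) := by
        rw [hz3', h3c, show 2*(θ₀/2 + Real.pi) = θ₀ + 2*Real.pi by ring, cE_period]
      exact key o z₀ z₁ z₂ z₃ r hr (θ₀/2) (τ₁/2) (τ₂/2) (θ₀/2 + Real.pi)
        (by rw [hz0, cE_half]) (by rw [hz1', cE_half])
        (by rw [hz2', cE_half]) hz3''
        (by linarith [hb1.1]) (by linarith) (by linarith [hb2.2]) (by linarith)
        (by linarith) (by linarith [hb2.2]) (by linarith [hb1.2]) (by linarith)
    · exact absurd (h1c.trans h3c.symm) ht13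
  · -- order θ₀ < τ₁ < τ₂ < τ₃
    have hs1pos : 0 < s1 := by
      rcases lt_or_eq_of_le hs1nn with h | h
      · exact h
      · rw [← h, zero_mul] at hc; exact absurd hc (lt_irrefl 0)
    have hy1pos : 0 < y1 := by
      by_contra hcon
      push_neg at hcon
      exact absurd hc (not_lt.mpr (mul_nonpos_of_nonneg_of_nonpos hs1pos.le hcon))
    have h01 : θ₀ < τ₁ := by
      have := aux_sin_pos (by linarith) hx1u hs1pos; linarith
    have h12 : τ₁ < τ₂ := by
      have := aux_sin_pos hy1l hy1u hy1pos; linarith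
    have ht3neg : s3 * y3 < 0 := by
      have h1 : 0 < a' * (s1 * y1) := mul_pos ha'pos hc
      have h2 : b' * (s3 * y3) = -(a' * (s1 * y1)) := by linarith [him2]
      by_contra hcon
      push_neg at hcon
      have := mul_nonneg hb'pos.le hcon
      linarith
    have hs3pos : 0 < s3 := by
      rcases lt_or_eq_of_le hs3nn with h | h
      · exact h
      · rw [← h, zero_mul] at ht3neg; exact absurd ht3neg (lt_irrefl 0)
    have hy3neg : y3 < 0 := by
      by_contra hcon
      push_neg at hcon
      exact absurd ht3neg (not_lt.mpr (mul_nonneg hs3pos.le hcon))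
    have h23 : τ₂ < τ₃ := by
      have := aux_sin_neg hy3l hy3u hy3neg; linarith
    exact key o z₀ z₁ z₂ z₃ r hr (θ₀/2) (τ₁/2) (τ₂/2) (τ₃/2)
      (by rw [hz0, cE_half]) (by rw [hz1', cE_half])
      (by rw [hz2', cE_half]) (by rw [hz3', cE_half])
      (by linarith) (by linarith) (by linarith) (by linarith [hb3.2])
      (by linarith) (by linarith [hb2.2]) (by linarith) (by linarith [hb3.2])



/-- The incentre of a triangle `X Y Z`, as the convex combination of the vertices
weighted by the lengths of the opposite sides. -/
noncomputable def incenter (X Y Z : EuclideanSpace ℝ (Fin 2)) : EuclideanSpace ℝ (Fin 2) :=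
  (dist Y Z + dist Z X + dist X Y)⁻¹ •
    (dist Y Z • X + dist Z X • Y + dist X Y • Z)

noncomputable def eqv : EuclideanSpace ℝ (Fin 2) ≃ₗᵢ[ℝ] ℂ :=
  Complex.orthonormalBasisOneI.repr.symm

lemma eqv_incenter (X Y Z : EuclideanSpace ℝ (Fin 2)) :
    eqv (incenter X Y Z) = cin (eqv X) (eqv Y) (eqv Z) := by
  simp only [incenter, cin, map_smul, map_add, LinearIsometryEquiv.dist_map]

/-- Japanese theorem: if `P₀ P₁ P₂ P₃` lie on a circle, taken in cyclic order (their
diagonals `P₀P₂` and `P₁P₃` cross), then the incentres `J₀, J₁, J₂, J₃` of the four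
triangles `P₁P₂P₃`, `P₀P₂P₃`, `P₀P₁P₃`, `P₀P₁P₂` form a rectangle, here expressed as
a parallelogram (`J₁ - J₀ = J₂ - J₃`) with equal diagonals
(`dist J₀ J₂ = dist J₁ J₃`). -/
theorem stmt_14 (P₀ P₁ P₂ P₃ O : EuclideanSpace ℝ (Fin 2)) (r : ℝ) (hr : 0 < r)
    (h0 : dist O P₀ = r) (h1 : dist O P₁ = r) (h2 : dist O P₂ = r) (h3 : dist O P₃ = r)
    (hcross : ∃ X : EuclideanSpace ℝ (Fin 2), Sbtw ℝ P₀ X P₂ ∧ Sbtw ℝ P₁ X P₃) :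
    incenter P₀ P₂ P₃ - incenter P₁ P₂ P₃ =
      incenter P₀ P₁ P₃ - incenter P₀ P₁ P₂ ∧
    dist (incenter P₁ P₂ P₃) (incenter P₀ P₁ P₃) =
      dist (incenter P₀ P₂ P₃) (incenter P₀ P₁ P₂) := by

  obtain ⟨X, hX02, hX13⟩ := hcross
  have hsb02 : Sbtw ℝ (eqv P₀) (eqv X) (eqv P₂) := by
    have := (eqv.toLinearEquiv.toAffineEquiv.sbtw_map_iff (x := P₀) (y := X) (z := P₂)).mpr hX02
    exact this
  have hsb13 : Sbtw ℝ (eqv P₁) (eqv X) (eqv P₃) := by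
    have := (eqv.toLinearEquiv.toAffineEquiv.sbtw_map_iff (x := P₁) (y := X) (z := P₃)).mpr hX13
    exact this
  obtain ⟨hk1, hk2⟩ := complex_main (eqv O) (eqv P₀) (eqv P₁) (eqv P₂) (eqv P₃) (eqv X) r hr
    (by rw [eqv.dist_map]; exact h0) (by rw [eqv.dist_map]; exact h1)
    (by rw [eqv.dist_map]; exact h2) (by rw [eqv.dist_map]; exact h3)
    hsb02 hsb13
  constructor
  · apply eqv.injective
    rw [map_sub, map_sub, eqv_incenter, eqv_incenter, eqv_incenter, eqv_incenter]
    exact hk1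
  · rw [← eqv.dist_map (incenter P₁ P₂ P₃), ← eqv.dist_map (incenter P₀ P₂ P₃),
      eqv_incenter, eqv_incenter, eqv_incenter, eqv_incenter]
    exact hk2
end

section
/- In any triangle, the necessary and sufficient condition 2s = 4R + r (s the semiperimeter, R the circumradius, r the inradius) is equivalent to tan(A/2) + tan(B/2) + tan(C/2) = 2, and also equivalent to the polynomial identity 5(a⁴+b⁴+c⁴) − 4(a³(b+c)+b³(c+a)+c³(a+b)) − 2(b²c²+c²a²+a²b²) + 4abc(a+b+c) = 0 in the edge lengths a, b, c. -/
open Real in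
lemma tan_half_arccos' {t p : ℝ} (ht1 : -1 < t) (ht2 : t < 1) (hp : 0 ≤ p)
    (h : p ^ 2 * (1 + t) = 1 - t) : Real.tan (Real.arccos t / 2) = p := by
  have hA0 : 0 ≤ Real.arccos t := Real.arccos_nonneg t
  have hAπ : Real.arccos t ≤ π := Real.arccos_le_pi t
  have hπ := Real.pi_pos
  have hcos : Real.cos (Real.arccos t) = t := Real.cos_arccos ht1.le ht2.le
  rw [Real.tan_eq_sin_div_cos, Real.sin_half_eq_sqrt hA0 (by linarith),
    Real.cos_half (by linarith) hAπ, hcos, ← Real.sqrt_div (by linarith)]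
  have hv : (0:ℝ) < (1 + t) / 2 := by linarith
  have : (1 - t) / 2 / ((1 + t) / 2) = p ^ 2 := by
    have hne : (1:ℝ) + t ≠ 0 := by linarith
    field_simp
    linear_combination -h
  rw [this, Real.sqrt_sq hp]

set_option maxHeartbeats 1000000 in
/-- In any triangle with side lengths `a, b, c`, semiperimeter `s`, circumradius `R`,
inradius `r` and angles `A, B, C`, the condition `2s = 4R + r` is equivalent to
`tan (A/2) + tan (B/2) + tan (C/2) = 2`, and also equivalent to the polynomial
identity `5(a⁴+b⁴+c⁴) − 4(a³(b+c)+b³(c+a)+c³(a+b)) − 2(b²c²+c²a²+a²b²)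
+ 4abc(a+b+c) = 0`. -/
theorem stmt_15 (a b c : ℝ) (ha : 0 < a) (hb : 0 < b) (hc : 0 < c)
    (hab : a < b + c) (hbc : b < c + a) (hca : c < a + b) :
    let s : ℝ := (a + b + c) / 2
    let Δ : ℝ := Real.sqrt (s * (s - a) * (s - b) * (s - c))
    let R : ℝ := a * b * c / (4 * Δ)
    let r : ℝ := Δ / s
    let A : ℝ := Real.arccos ((b ^ 2 + c ^ 2 - a ^ 2) / (2 * b * c))
    let B : ℝ := Real.arccos ((c ^ 2 + a ^ 2 - b ^ 2) / (2 * c * a))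
    let C : ℝ := Real.arccos ((a ^ 2 + b ^ 2 - c ^ 2) / (2 * a * b))
    ((2 * s = 4 * R + r ↔
        Real.tan (A / 2) + Real.tan (B / 2) + Real.tan (C / 2) = 2) ∧
     (2 * s = 4 * R + r ↔
        5 * (a ^ 4 + b ^ 4 + c ^ 4)
          - 4 * (a ^ 3 * (b + c) + b ^ 3 * (c + a) + c ^ 3 * (a + b))
          - 2 * (b ^ 2 * c ^ 2 + c ^ 2 * a ^ 2 + a ^ 2 * b ^ 2)
          + 4 * a * b * c * (a + b + c) = 0)) := by
  intro s Δ R r A B C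
  have hs : s = (a + b + c) / 2 := rfl
  have hR : R = a * b * c / (4 * Δ) := rfl
  have hr : r = Δ / s := rfl
  have hA : A = Real.arccos ((b ^ 2 + c ^ 2 - a ^ 2) / (2 * b * c)) := rfl
  have hB : B = Real.arccos ((c ^ 2 + a ^ 2 - b ^ 2) / (2 * c * a)) := rfl
  have hC : C = Real.arccos ((a ^ 2 + b ^ 2 - c ^ 2) / (2 * a * b)) := rfl
  have hu : (0:ℝ) < b + c - a := by linarith
  have hv : (0:ℝ) < c + a - b := by linarith
  have hw : (0:ℝ) < a + b - c := by linarith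
  have hp : (0:ℝ) < a + b + c := by linarith
  have hxp : 0 < s * (s - a) * (s - b) * (s - c) := by rw [hs]; nlinarith [mul_pos (mul_pos (mul_pos hp hu) hv) hw]
  have hΔpos : 0 < Δ := Real.sqrt_pos.mpr hxp
  have hΔ2 : Δ ^ 2 = s * (s - a) * (s - b) * (s - c) := Real.sq_sqrt hxp.le
  have hΔ2' : Δ ^ 2 = (a + b + c) * (b + c - a) * (c + a - b) * (a + b - c) / 16 := by
    rw [hΔ2, hs]; ring
  -- tangent half-angle values
  have htA : Real.tan (A / 2) = 4 * Δ / ((a + b + c) * (b + c - a)) := by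
    rw [hA]
    apply tan_half_arccos'
    · rw [lt_div_iff₀ (by positivity : (0:ℝ) < 2 * b * c)]
      nlinarith [mul_pos hu hp]
    · rw [div_lt_iff₀ (by positivity : (0:ℝ) < 2 * b * c)]
      nlinarith [mul_pos hv hw]
    · exact (div_pos (by linarith) (by positivity)).le
    · have hne1 : (a + b + c) * (b + c - a) ≠ 0 := by positivity
      have hne2 : (2:ℝ) * b * c ≠ 0 := by positivity
      field_simp
      linear_combination (16 * (a + b + c) * (b + c - a)) * hΔ2'
  have htB : Real.tan (B / 2) = 4 * Δ / ((a + b + c) * (c + a - b)) := by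
    rw [hB]
    apply tan_half_arccos'
    · rw [lt_div_iff₀ (by positivity : (0:ℝ) < 2 * c * a)]
      nlinarith [mul_pos hv hp]
    · rw [div_lt_iff₀ (by positivity : (0:ℝ) < 2 * c * a)]
      nlinarith [mul_pos hw hu]
    · exact (div_pos (by linarith) (by positivity)).le
    · have hne1 : (a + b + c) * (c + a - b) ≠ 0 := by positivity
      have hne2 : (2:ℝ) * c * a ≠ 0 := by positivity
      field_simp
      linear_combination (16 * (a + b + c) * (c + a - b)) * hΔ2'
  have htC : Real.tan (C / 2) = 4 * Δ / ((a + b + c) * (a + b - c)) := by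
    rw [hC]
    apply tan_half_arccos'
    · rw [lt_div_iff₀ (by positivity : (0:ℝ) < 2 * a * b)]
      nlinarith [mul_pos hw hp]
    · rw [div_lt_iff₀ (by positivity : (0:ℝ) < 2 * a * b)]
      nlinarith [mul_pos hu hv]
    · exact (div_pos (by linarith) (by positivity)).le
    · have hne1 : (a + b + c) * (a + b - c) ≠ 0 := by positivity
      have hne2 : (2:ℝ) * a * b ≠ 0 := by positivity
      field_simp
      linear_combination (16 * (a + b + c) * (a + b - c)) * hΔ2'
  -- the sum of half-angle tangents
  have e1 : 4 * Δ / ((a + b + c) * (b + c - a)) = (c + a - b) * (a + b - c) / (4 * Δ) := by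
    rw [div_eq_div_iff (by positivity) (by positivity)]
    linear_combination 16 * hΔ2'
  have e2 : 4 * Δ / ((a + b + c) * (c + a - b)) = (a + b - c) * (b + c - a) / (4 * Δ) := by
    rw [div_eq_div_iff (by positivity) (by positivity)]
    linear_combination 16 * hΔ2'
  have e3 : 4 * Δ / ((a + b + c) * (a + b - c)) = (b + c - a) * (c + a - b) / (4 * Δ) := by
    rw [div_eq_div_iff (by positivity) (by positivity)]
    linear_combination 16 * hΔ2'
  have hsum : Real.tan (A / 2) + Real.tan (B / 2) + Real.tan (C / 2)
      = ((b + c - a) * (c + a - b) + (c + a - b) * (a + b - c) + (a + b - c) * (b + c - a))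
        / (4 * Δ) := by
    rw [htA, htB, htC, e1, e2, e3]; ring
  -- the main condition rewritten
  have h4Rr : 4 * R + r = (a + b + c) *
      ((b + c - a) * (c + a - b) + (c + a - b) * (a + b - c) + (a + b - c) * (b + c - a))
      / (8 * Δ) := by
    rw [hR, hr, hs]
    have hne1 : (4:ℝ) * Δ ≠ 0 := by positivity
    have hne2 : (a + b + c) / 2 ≠ 0 := by positivity
    have hne3 : (8:ℝ) * Δ ≠ 0 := by positivity
    field_simp
    linear_combination 16 * hΔ2'
  have hcond : (2 * s = 4 * R + r) ↔
      (b + c - a) * (c + a - b) + (c + a - b) * (a + b - c) + (a + b - c) * (b + c - a)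
        = 8 * Δ := by
    rw [h4Rr, hs]
    constructor
    · intro h
      have h' : (a + b + c) * (8 * Δ) = (a + b + c) *
          ((b + c - a) * (c + a - b) + (c + a - b) * (a + b - c) + (a + b - c) * (b + c - a)) := by
        rw [eq_div_iff (by positivity : (8:ℝ) * Δ ≠ 0)] at h
        linear_combination h
      have := mul_left_cancel₀ (by positivity : (a + b + c) ≠ 0) h'
      linarith
    · intro h
      rw [h, eq_div_iff (by positivity : (8:ℝ) * Δ ≠ 0)]
      ring
  constructor
  · refine hcond.trans ?_
    rw [hsum, div_eq_iff (by positivity : (4:ℝ) * Δ ≠ 0)]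
    constructor <;> intro h <;> linarith
  · refine hcond.trans ?_
    constructor
    · intro h
      linear_combination ((b + c - a) * (c + a - b) + (c + a - b) * (a + b - c)
        + (a + b - c) * (b + c - a) + 8 * Δ) * h + 64 * hΔ2'
    · intro h
      have hsq : ((b + c - a) * (c + a - b) + (c + a - b) * (a + b - c)
          + (a + b - c) * (b + c - a)) ^ 2 = (8 * Δ) ^ 2 := by
        linear_combination h - 64 * hΔ2'
      have h3 : ((b + c - a) * (c + a - b) + (c + a - b) * (a + b - c)
          + (a + b - c) * (b + c - a) - 8 * Δ)
          * ((b + c - a) * (c + a - b) + (c + a - b) * (a + b - c)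
          + (a + b - c) * (b + c - a) + 8 * Δ) = 0 := by
        linear_combination hsq
      rcases mul_eq_zero.mp h3 with h4 | h4
      · linarith
      · nlinarith [mul_pos hu hv, mul_pos hv hw, mul_pos hw hu]
end

section
/- A rational triangle has an angle A with cos A = −7/25 if and only if its sides are proportional to a : b : c = 24(p²+q²) : (−7p²+48pq+7q²) : 25(p²−q²) for some rationals p, q; such (a,b,c) satisfy the triangle inequality whenever 7q > p > q > 0, and the relation 25(b²+c²−a²) = −14bc can be rewritten as (25a)² = (24c)² + (25b+7c)². -/
/-- A rational triangle has an angle `A` with `cos A = −7/25` iff its sides are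
proportional to `a : b : c = 24(p²+q²) : (−7p²+48pq+7q²) : 25(p²−q²)` for some
rationals `p, q`; such `(a, b, c)` are positive and satisfy the triangle inequality
whenever `7q > p > q > 0`; and the relation `25(b²+c²−a²) = −14bc` can be rewritten
as `(25a)² = (24c)² + (25b+7c)²`. -/
theorem stmt_17 :
    (∀ a b c : ℚ, 0 < a → 0 < b → 0 < c →
      ((b ^ 2 + c ^ 2 - a ^ 2) / (2 * b * c) = -(7 / 25) ↔
        ∃ p q k : ℚ, 0 < k ∧ a = k * (24 * (p ^ 2 + q ^ 2)) ∧
          b = k * (-7 * p ^ 2 + 48 * p * q + 7 * q ^ 2) ∧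
          c = k * (25 * (p ^ 2 - q ^ 2)))) ∧
    (∀ p q : ℚ, 0 < q → q < p → p < 7 * q →
      (0 < 24 * (p ^ 2 + q ^ 2) ∧ 0 < -7 * p ^ 2 + 48 * p * q + 7 * q ^ 2 ∧
        0 < 25 * (p ^ 2 - q ^ 2)) ∧
      (24 * (p ^ 2 + q ^ 2) <
          (-7 * p ^ 2 + 48 * p * q + 7 * q ^ 2) + 25 * (p ^ 2 - q ^ 2) ∧
        -7 * p ^ 2 + 48 * p * q + 7 * q ^ 2 <
          25 * (p ^ 2 - q ^ 2) + 24 * (p ^ 2 + q ^ 2) ∧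
        25 * (p ^ 2 - q ^ 2) <
          24 * (p ^ 2 + q ^ 2) + (-7 * p ^ 2 + 48 * p * q + 7 * q ^ 2))) ∧
    (∀ a b c : ℚ, 25 * (b ^ 2 + c ^ 2 - a ^ 2) = -14 * b * c ↔
      (25 * a) ^ 2 = (24 * c) ^ 2 + (25 * b + 7 * c) ^ 2) := by
  refine ⟨?_, ?_, ?_⟩
  · intro a b c ha hb hc
    constructor
    · intro h
      have hbc : (2 : ℚ) * b * c ≠ 0 := by positivity
      have key : 25 * (b ^ 2 + c ^ 2 - a ^ 2) = -14 * b * c := by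
        field_simp at h; linarith
      have hZ : (0:ℚ) < 25 * b + 7 * c := by linarith
      have hZ' : (25 * b + 7 * c : ℚ) ≠ 0 := ne_of_gt hZ
      have hXY : (0:ℚ) < 25 * a + 24 * c := by linarith
      have hXY' : (25 * a + 24 * c : ℚ) ≠ 0 := ne_of_gt hXY
      refine ⟨(25 * a + 24 * c) / (25 * b + 7 * c), 1,
        (25 * b + 7 * c) ^ 2 / (1200 * (25 * a + 24 * c)), by positivity, ?_, ?_, ?_⟩
      · field_simp
        linear_combination (-600) * key
      · field_simp
        linear_combination (-175) * key
      · field_simp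
        linear_combination 625 * key
    · rintro ⟨p, q, k, hk, rfl, rfl, rfl⟩
      have hbc : (2 : ℚ) * (k * (-7 * p ^ 2 + 48 * p * q + 7 * q ^ 2)) *
          (k * (25 * (p ^ 2 - q ^ 2))) ≠ 0 := by positivity
      rw [div_eq_iff hbc]
      ring
  · intro p q hq hqp hp7
    have h1 : 0 < (7 * q - p) * (7 * p + q) := by nlinarith
    have h2 : 0 < (p - q) * (7 * q - p) := by nlinarith
    have h3 : 0 < (7 * p + q) * (p - q) := by nlinarith
    have h4 : 0 < (7 * q - p) * (p + q) := by nlinarith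
    refine ⟨⟨by nlinarith, by nlinarith, by nlinarith⟩, by nlinarith, by nlinarith, by nlinarith⟩
  · intro a b c
    constructor <;> intro h <;> nlinarith [h]
end

section
/- In an orthocentric tetrahedron with orthocentre at the origin and vertices a, b, c, d (all pairwise dot products equal to σ), the point q = (a+b+c+d)/2 is equidistant from all four vertices (hence is the circumcentre), and the centroid g = (a+b+c+d)/4 is the midpoint of the segment from the orthocentre to the circumcentre; moreover the six midpoints of the edges are equidistant from g. -/
open RealInnerProductSpace

private lemma norm_eq_of_inner_self_eq {E : Type*} [NormedAddCommGroup E]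
    [InnerProductSpace ℝ E] {x y : E} (h : ⟪x, x⟫ = ⟪y, y⟫) : ‖x‖ = ‖y‖ := by
  have hx : ‖x‖ = Real.sqrt ⟪x, x⟫ := by
    rw [real_inner_self_eq_norm_sq, Real.sqrt_sq (norm_nonneg x)]
  have hy : ‖y‖ = Real.sqrt ⟪y, y⟫ := by
    rw [real_inner_self_eq_norm_sq, Real.sqrt_sq (norm_nonneg y)]
  rw [hx, hy, h]

/-- In an orthocentric tetrahedron with orthocentre at the origin and vertices
`a, b, c, d` (all pairwise inner products equal to `σ`), the point
`q = (a+b+c+d)/2` is equidistant from all four vertices (hence is the circumcentre),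
the centroid `g = (a+b+c+d)/4` is the midpoint of the segment from the orthocentre
(the origin) to the circumcentre, and the six midpoints of the edges are equidistant
from `g`. -/
theorem stmt_19 (a b c d : EuclideanSpace ℝ (Fin 3)) (σ : ℝ)
    (hab : ⟪a, b⟫ = σ) (hac : ⟪a, c⟫ = σ) (had : ⟪a, d⟫ = σ)
    (hbc : ⟪b, c⟫ = σ) (hbd : ⟪b, d⟫ = σ) (hcd : ⟪c, d⟫ = σ) :
    let q : EuclideanSpace ℝ (Fin 3) := (2 : ℝ)⁻¹ • (a + b + c + d)
    let g : EuclideanSpace ℝ (Fin 3) := (4 : ℝ)⁻¹ • (a + b + c + d)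
    (dist q a = dist q b ∧ dist q b = dist q c ∧ dist q c = dist q d) ∧
    g = midpoint ℝ (0 : EuclideanSpace ℝ (Fin 3)) q ∧
    (dist g (midpoint ℝ a b) = dist g (midpoint ℝ a c) ∧
      dist g (midpoint ℝ a c) = dist g (midpoint ℝ a d) ∧
      dist g (midpoint ℝ a d) = dist g (midpoint ℝ b c) ∧
      dist g (midpoint ℝ b c) = dist g (midpoint ℝ b d) ∧
      dist g (midpoint ℝ b d) = dist g (midpoint ℝ c d)) := by
  intro q g
  have hba : ⟪b, a⟫ = σ := by rw [real_inner_comm]; exact hab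
  have hca : ⟪c, a⟫ = σ := by rw [real_inner_comm]; exact hac
  have hda : ⟪d, a⟫ = σ := by rw [real_inner_comm]; exact had
  have hcb : ⟪c, b⟫ = σ := by rw [real_inner_comm]; exact hbc
  have hdb : ⟪d, b⟫ = σ := by rw [real_inner_comm]; exact hbd
  have hdc : ⟪d, c⟫ = σ := by rw [real_inner_comm]; exact hcd
  have hmid : ∀ x y : EuclideanSpace ℝ (Fin 3),
      midpoint ℝ x y = (2 : ℝ)⁻¹ • (x + y) := fun x y => by
    rw [midpoint_eq_smul_add]; norm_num
  refine ⟨⟨?_, ?_, ?_⟩, ?_, ?_, ?_, ?_, ?_, ?_⟩ <;>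
    · first
      | (show g = _
         simp only [g, q, midpoint_eq_smul_add, smul_zero, zero_add, smul_smul]
         norm_num)
      | (simp only [dist_eq_norm]
         apply norm_eq_of_inner_self_eq
         simp only [q, g, hmid, inner_sub_left, inner_sub_right, inner_add_left,
           inner_add_right, real_inner_smul_left, real_inner_smul_right,
           hab, hac, had, hbc, hbd, hcd, hba, hca, hda, hcb, hdb, hdc]
         ring)
end
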